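/- For 0 < q < 1, p > 0, α > 0 and λ > -1, the Jackson q-integral ∫_0^x t^{p-1} (x^p - (qt)^p)_{q^p}^(α-1) (t^p)_{q^p}^(λ) d_q t equals (1/[p]_q) · (Γ_{q^p}(α) Γ_{q^p}(λ+1) / Γ_{q^p}(α+λ+1)) · (x^p)_{q^p}^(α+λ), where (x^p)_{q^p}^(β) denotes (x^p - 0)_{q^p}^(β) = x^{pβ}. -/

import Mathlib

noncomputable section

open scoped Topology
open Filter Finset Real

/-- q-shifted factorial `(a;q)_∞ = ∏_{j≥0} (1 - a q^j)`. -/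
def qPochInf (a q : ℝ) : ℝ := ∏' j : ℕ, (1 - a * q ^ j)

/-- q-number `[a]_q = (1-q^a)/(1-q)`. -/
def qNum (a q : ℝ) : ℝ := (1 - q ^ a) / (1 - q)

/-- generalized q-exponent `(X - Y)_{q'}^{(α)} = X^α (Y/X;q')_∞ / (q'^α Y/X;q')_∞`. -/
def qExpGen (q' α X Y : ℝ) : ℝ := X ^ α * qPochInf (Y / X) q' / qPochInf (q' ^ α * (Y / X)) q'

/-- `(x^p - y^p)_{q^p}^{(α)}`. -/
def genExp (p q α x y : ℝ) : ℝ := qExpGen (q ^ p) α (x ^ p) (y ^ p)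

/-- Jackson q-integral `∫_0^b f d_q t = (1-q) b ∑_{i≥0} q^i f(q^i b)`. -/
def jackson0 (q b : ℝ) (f : ℝ → ℝ) : ℝ := (1 - q) * b * ∑' i : ℕ, q ^ i * f (q ^ i * b)

/-- Jackson q-integral `∫_a^b f d_q t`. -/
def jacksonI (q a b : ℝ) (f : ℝ → ℝ) : ℝ := jackson0 q b f - jackson0 q a f

/-- q-Gamma function `Γ_q(t) = (q;q)_∞ (1-q)^{1-t} / (q^t;q)_∞`. -/
def qGammaF (q t : ℝ) : ℝ := qPochInf q q * (1 - q) ^ (1 - t) / qPochInf (q ^ t) q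

/-- q-derivative `D_q f(x) = (f(x)-f(qx))/((1-q)x)`. -/
def qDeriv (q : ℝ) (f : ℝ → ℝ) (x : ℝ) : ℝ := (f x - f (q * x)) / ((1 - q) * x)

/-- generalized q-fractional integral `J_{a+,p,q}^β`. -/
def Jfrac (q p β a : ℝ) (g : ℝ → ℝ) (x : ℝ) : ℝ :=
  qNum p q ^ (1 - β) / qGammaF (q ^ p) β *
    jacksonI q a x (fun w => w ^ (p - 1) * g w * genExp p q (β - 1) x (w * q))

/-- Riemann–Liouville type generalized q-fractional derivative `D_{a+,p,q}^α`. -/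
def RLfrac (q p α a : ℝ) (f : ℝ → ℝ) (x : ℝ) : ℝ :=
  qNum p q ^ α / qGammaF (q ^ p) (1 - α) *
    (x ^ (1 - p) *
      qDeriv q
        (fun t => jacksonI q a t (fun w => w ^ (p - 1) * f w * genExp p q (-α) t (w * q))) x)

/-- Caputo type generalized q-fractional derivative `ᶜD_{a+,p,q}^α f = D_{a+,p,q}^α (f - f a)`. -/
def caputoFrac (q p α a : ℝ) (f : ℝ → ℝ) (x : ℝ) : ℝ :=
  RLfrac q p α a (fun t => f t - f a) x

/-- successive approximations: `succApprox 0 = ζ` (i.e. φ₁), `succApprox (n+1) = φ_{n+2}`. -/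
def succApprox (q p α a ζ : ℝ) (f : ℝ → ℝ → ℝ) : ℕ → ℝ → ℝ
  | 0 => fun _ => ζ
  | n + 1 => fun t => ζ +
      qNum p q ^ (1 - α) / qGammaF (q ^ p) α *
        jacksonI q a t
          (fun w => w ^ (p - 1) * f w (succApprox q p α a ζ f n w) * genExp p q (α - 1) t (w * q))

section Poch
variable {Q c : ℝ}

lemma factor_pos (hQ0 : 0 < Q) (hQ1 : Q < 1) (hc0 : 0 ≤ c) (hc1 : c < 1) (k : ℕ) :
    0 < 1 - c * Q ^ k := by
  have h1 : Q ^ k ≤ 1 := pow_le_one₀ hQ0.le hQ1.le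
  have h2 : 0 < Q ^ k := pow_pos hQ0 k
  nlinarith

lemma log_summable (hQ0 : 0 < Q) (hQ1 : Q < 1) (hc0 : 0 ≤ c) (hc1 : c < 1) :
    Summable fun k : ℕ => Real.log (1 - c * Q ^ k) := by
  have key : Summable fun k : ℕ => -Real.log (1 - c * Q ^ k) := by
    apply Summable.of_nonneg_of_le (f := fun k : ℕ => (c / (1 - c)) * Q ^ k)
    · intro k
      have := factor_pos hQ0 hQ1 hc0 hc1 k
      have h1 : Q ^ k ≤ 1 := pow_le_one₀ hQ0.le hQ1.le
      have h2 : 0 < Q ^ k := pow_pos hQ0 k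
      have : Real.log (1 - c * Q ^ k) ≤ 0 := Real.log_nonpos (by nlinarith) (by nlinarith)
      linarith
    · intro k
      have hpos := factor_pos hQ0 hQ1 hc0 hc1 k
      have h2 : 0 < Q ^ k := pow_pos hQ0 k
      have h1 : Q ^ k ≤ 1 := pow_le_one₀ hQ0.le hQ1.le
      have hinv : 0 < (1 - c * Q ^ k)⁻¹ := inv_pos.mpr hpos
      have hlog : Real.log ((1 - c * Q ^ k)⁻¹) ≤ (1 - c * Q ^ k)⁻¹ - 1 :=
        Real.log_le_sub_one_of_pos hinv
      rw [Real.log_inv] at hlog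
      have hcc : 0 < 1 - c := by linarith
      have hb : (1 - c * Q ^ k)⁻¹ - 1 = (c * Q ^ k) / (1 - c * Q ^ k) := by
        field_simp
        ring
      rw [hb] at hlog
      have hd : (c * Q ^ k) / (1 - c * Q ^ k) ≤ (c / (1 - c)) * Q ^ k := by
        have e1 : (c / (1 - c)) * Q ^ k = (c * Q ^ k) / (1 - c) := by ring
        rw [e1]
        apply div_le_div_of_nonneg_left (mul_nonneg hc0 h2.le) hcc
        nlinarith
      calc -Real.log (1 - c * Q ^ k) ≤ (c * Q ^ k) / (1 - c * Q ^ k) := hlog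
        _ ≤ (c / (1 - c)) * Q ^ k := hd
    · exact (summable_geometric_of_lt_one hQ0.le hQ1).mul_left _
  have h2 := key.neg
  simpa using h2

lemma poch_hasProd (hQ0 : 0 < Q) (hQ1 : Q < 1) (hc0 : 0 ≤ c) (hc1 : c < 1) :
    HasProd (fun k : ℕ => 1 - c * Q ^ k) (qPochInf c Q) := by
  have hsum := log_summable hQ0 hQ1 hc0 hc1
  have h1 : HasProd (fun k : ℕ => 1 - c * Q ^ k)
      (Real.exp (∑' k : ℕ, Real.log (1 - c * Q ^ k))) := by
    have h2 := hsum.hasSum.rexp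
    have h3 : (rexp ∘ fun k : ℕ => Real.log (1 - c * Q ^ k)) = fun k : ℕ => 1 - c * Q ^ k := by
      funext k
      exact Real.exp_log (factor_pos hQ0 hQ1 hc0 hc1 k)
    rwa [h3] at h2
  have := h1.tprod_eq
  rw [qPochInf, this]
  exact h1

lemma poch_pos (hQ0 : 0 < Q) (hQ1 : Q < 1) (hc0 : 0 ≤ c) (hc1 : c < 1) :
    0 < qPochInf c Q := by
  have hsum := log_summable hQ0 hQ1 hc0 hc1
  have h1 : HasProd (fun k : ℕ => 1 - c * Q ^ k)
      (Real.exp (∑' k : ℕ, Real.log (1 - c * Q ^ k))) := by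
    have h2 := hsum.hasSum.rexp
    have h3 : (rexp ∘ fun k : ℕ => Real.log (1 - c * Q ^ k)) = fun k : ℕ => 1 - c * Q ^ k := by
      funext k
      exact Real.exp_log (factor_pos hQ0 hQ1 hc0 hc1 k)
    rwa [h3] at h2
  have := h1.tprod_eq
  rw [qPochInf, this]
  exact Real.exp_pos _

lemma poch_tendsto (hQ0 : 0 < Q) (hQ1 : Q < 1) (hc0 : 0 ≤ c) (hc1 : c < 1) :
    Tendsto (fun n => ∏ k ∈ range n, (1 - c * Q ^ k)) atTop (𝓝 (qPochInf c Q)) :=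
  (poch_hasProd hQ0 hQ1 hc0 hc1).tendsto_prod_nat

lemma poch_shift (hQ0 : 0 < Q) (hQ1 : Q < 1) (hc0 : 0 ≤ c) (hc1 : c < 1) (i : ℕ) :
    qPochInf c Q = (∏ k ∈ range i, (1 - c * Q ^ k)) * qPochInf (c * Q ^ i) Q := by
  have hc0' : 0 ≤ c * Q ^ i := mul_nonneg hc0 (pow_pos hQ0 i).le
  have hc1' : c * Q ^ i < 1 := by
    have h1 : Q ^ i ≤ 1 := pow_le_one₀ hQ0.le hQ1.le
    have h2 : 0 < Q ^ i := pow_pos hQ0 i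
    nlinarith
  have h1 := poch_tendsto hQ0 hQ1 hc0 hc1
  have h2 := poch_tendsto hQ0 hQ1 hc0' hc1'
  have key : ∀ n, ∏ k ∈ range (i + n), (1 - c * Q ^ k)
      = (∏ k ∈ range i, (1 - c * Q ^ k)) * ∏ k ∈ range n, (1 - (c * Q ^ i) * Q ^ k) := by
    intro n
    rw [Finset.prod_range_add]
    congr 1
    apply Finset.prod_congr rfl
    intro k _
    rw [pow_add]
    ring
  have h3 : Tendsto (fun n => ∏ k ∈ range (i + n), (1 - c * Q ^ k)) atTop (𝓝 (qPochInf c Q)) := by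
    have := h1.comp (tendsto_add_atTop_nat i)
    simpa [Function.comp_def, Nat.add_comm] using this
  have h4 : Tendsto (fun n => (∏ k ∈ range i, (1 - c * Q ^ k)) * ∏ k ∈ range n, (1 - (c * Q ^ i) * Q ^ k))
      atTop (𝓝 ((∏ k ∈ range i, (1 - c * Q ^ k)) * qPochInf (c * Q ^ i) Q)) :=
    h2.const_mul _
  have h5 : Tendsto (fun n => ∏ k ∈ range (i + n), (1 - c * Q ^ k)) atTop
      (𝓝 ((∏ k ∈ range i, (1 - c * Q ^ k)) * qPochInf (c * Q ^ i) Q)) := by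
    simpa only [key] using h4
  exact tendsto_nhds_unique h3 h5

end Poch

section Heine
variable {Q a z : ℝ}

/-- coefficients of the q-binomial series -/
def hr (Q a : ℝ) (i : ℕ) : ℝ := ∏ k ∈ range i, ((1 - a * Q ^ k) / (1 - Q ^ (k + 1)))

lemma hr_zero : hr Q a 0 = 1 := by simp [hr]

lemma hr_succ (i : ℕ) : hr Q a (i + 1) = hr Q a i * ((1 - a * Q ^ i) / (1 - Q ^ (i + 1))) :=
  Finset.prod_range_succ _ _

lemma Qpow_lt_one (hQ0 : 0 < Q) (hQ1 : Q < 1) (k : ℕ) (hk : k ≠ 0) : Q ^ k < 1 :=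
  pow_lt_one₀ hQ0.le hQ1 hk

lemma hr_nonneg (hQ0 : 0 < Q) (hQ1 : Q < 1) (ha0 : 0 ≤ a) (ha1 : a < 1) (i : ℕ) :
    0 ≤ hr Q a i := by
  apply Finset.prod_nonneg
  intro k _
  apply div_nonneg
  · have := factor_pos hQ0 hQ1 ha0 ha1 k
    linarith
  · have := Qpow_lt_one hQ0 hQ1 (k+1) (Nat.succ_ne_zero k)
    linarith

lemma hr_rec (hQ0 : 0 < Q) (hQ1 : Q < 1) (i : ℕ) :
    hr Q a (i + 1) * (1 - Q ^ (i + 1)) = hr Q a i * (1 - a * Q ^ i) := by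
  have h : (1 : ℝ) - Q ^ (i + 1) ≠ 0 := by
    have := Qpow_lt_one hQ0 hQ1 (i+1) (Nat.succ_ne_zero i)
    linarith
  rw [hr_succ]
  field_simp

lemma summable_hr (hQ0 : 0 < Q) (hQ1 : Q < 1) (ha0 : 0 ≤ a) (ha1 : a < 1)
    (hz0 : 0 ≤ z) (hz1 : z < 1) : Summable (fun i => hr Q a i * z ^ i) := by
  apply summable_of_ratio_norm_eventually_le (r := (1 + z) / 2) (by linarith)
  have htend : Tendsto (fun n : ℕ => z * ((1 - a * Q ^ n) / (1 - Q ^ (n + 1)))) atTop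
      (𝓝 (z * ((1 - a * 0) / (1 - 0)))) := by
    apply Tendsto.const_mul
    apply Tendsto.div
    · exact tendsto_const_nhds.sub ((tendsto_pow_atTop_nhds_zero_of_lt_one hQ0.le hQ1).const_mul a)
    · have : Tendsto (fun n : ℕ => Q ^ (n + 1)) atTop (𝓝 0) := by
        have h := (tendsto_pow_atTop_nhds_zero_of_lt_one hQ0.le hQ1).comp (tendsto_add_atTop_nat 1)
        simpa [Function.comp_def] using h
      exact tendsto_const_nhds.sub this
    · norm_num
  simp only [mul_zero, sub_zero, mul_one, div_one] at htend
  have hev : ∀ᶠ n : ℕ in atTop, z * ((1 - a * Q ^ n) / (1 - Q ^ (n + 1))) ≤ (1 + z) / 2 := by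
    have : z < (1 + z) / 2 := by linarith
    exact htend.eventually_le_const this
  filter_upwards [hev] with n hn
  have hden : (0:ℝ) < 1 - Q ^ (n + 1) := by
    have := Qpow_lt_one hQ0 hQ1 (n+1) (Nat.succ_ne_zero n)
    linarith
  have hnum : (0:ℝ) ≤ 1 - a * Q ^ n := (factor_pos hQ0 hQ1 ha0 ha1 n).le
  have h1 : 0 ≤ hr Q a n * z ^ n := mul_nonneg (hr_nonneg hQ0 hQ1 ha0 ha1 n) (pow_nonneg hz0 n)
  have h2 : 0 ≤ hr Q a (n+1) * z ^ (n+1) :=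
    mul_nonneg (hr_nonneg hQ0 hQ1 ha0 ha1 (n+1)) (pow_nonneg hz0 (n+1))
  rw [Real.norm_of_nonneg h2, Real.norm_of_nonneg h1]
  have key : hr Q a (n+1) * z ^ (n+1)
      = (z * ((1 - a * Q ^ n) / (1 - Q ^ (n + 1)))) * (hr Q a n * z ^ n) := by
    rw [hr_succ, pow_succ]
    ring
  rw [key]
  have hfac : 0 ≤ z * ((1 - a * Q ^ n) / (1 - Q ^ (n + 1))) :=
    mul_nonneg hz0 (div_nonneg hnum hden.le)
  calc (z * ((1 - a * Q ^ n) / (1 - Q ^ (n + 1)))) * (hr Q a n * z ^ n)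
      ≤ ((1 + z) / 2) * (hr Q a n * z ^ n) := mul_le_mul_of_nonneg_right hn h1
    _ = (1 + z) / 2 * (hr Q a n * z ^ n) := rfl

/-- the q-binomial series -/
def hF (Q a z : ℝ) : ℝ := ∑' i : ℕ, hr Q a i * z ^ i

lemma hF_ge_one (hQ0 : 0 < Q) (hQ1 : Q < 1) (ha0 : 0 ≤ a) (ha1 : a < 1)
    (hz0 : 0 ≤ z) (hz1 : z < 1) : 1 ≤ hF Q a z := by
  have h := Summable.le_tsum (summable_hr hQ0 hQ1 ha0 ha1 hz0 hz1) 0 (fun j _ =>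
    mul_nonneg (hr_nonneg hQ0 hQ1 ha0 ha1 j) (pow_nonneg hz0 j))
  simpa [hr_zero, hF] using h

lemma funct_eq (hQ0 : 0 < Q) (hQ1 : Q < 1) (ha0 : 0 ≤ a) (ha1 : a < 1)
    (hz0 : 0 ≤ z) (hz1 : z < 1) :
    (1 - z) * hF Q a z = (1 - a * z) * hF Q a (Q * z) := by
  have hQz0 : 0 ≤ Q * z := mul_nonneg hQ0.le hz0
  have hQz1 : Q * z < 1 := by nlinarith
  have sz := summable_hr hQ0 hQ1 ha0 ha1 hz0 hz1
  have sQz := summable_hr hQ0 hQ1 ha0 ha1 hQz0 hQz1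
  have sA : Summable (fun i => (1 - z) * (hr Q a i * z ^ i)) := sz.mul_left _
  have sB : Summable (fun i => (1 - a * z) * (hr Q a i * (Q * z) ^ i)) := sQz.mul_left _
  have hAF : ∑' i : ℕ, (1 - z) * (hr Q a i * z ^ i) = (1 - z) * hF Q a z := by
    rw [hF, tsum_mul_left]
  have hBF : ∑' i : ℕ, (1 - a * z) * (hr Q a i * (Q * z) ^ i) = (1 - a * z) * hF Q a (Q * z) := by
    rw [hF, tsum_mul_left]
  rw [← hAF, ← hBF]
  -- telescoping
  set u : ℕ → ℝ := fun i => hr Q a i * (1 - Q ^ i) * z ^ i with hu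
  have hterm : ∀ i : ℕ, (1 - z) * (hr Q a i * z ^ i) - (1 - a * z) * (hr Q a i * (Q * z) ^ i)
      = u i - u (i + 1) := by
    intro i
    have h1 : u (i + 1) = (hr Q a (i+1) * (1 - Q ^ (i+1))) * z ^ (i+1) := by
      rw [hu]
    rw [h1, hr_rec hQ0 hQ1, hu]
    simp only [mul_pow]
    ring
  have hsub : Summable (fun i => u i - u (i + 1)) := by
    apply Summable.congr (sA.sub sB)
    intro i
    exact hterm i
  have hu0 : u 0 = 0 := by simp [hu]
  have hulim : Tendsto u atTop (𝓝 0) := by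
    have hz' := sz.tendsto_atTop_zero
    have hupper : ∀ i, |u i| ≤ hr Q a i * z ^ i := by
      intro i
      have hQi : 0 < Q ^ i := pow_pos hQ0 i
      have hQi1 : Q ^ i ≤ 1 := pow_le_one₀ hQ0.le hQ1.le
      have h1 : 0 ≤ hr Q a i * z ^ i :=
        mul_nonneg (hr_nonneg hQ0 hQ1 ha0 ha1 i) (pow_nonneg hz0 i)
      have h2 : 0 ≤ u i := by
        rw [hu]
        exact mul_nonneg (mul_nonneg (hr_nonneg hQ0 hQ1 ha0 ha1 i) (by linarith))
          (pow_nonneg hz0 i)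
      rw [abs_of_nonneg h2, hu]
      show hr Q a i * (1 - Q ^ i) * z ^ i ≤ hr Q a i * z ^ i
      nlinarith [mul_nonneg (hr_nonneg hQ0 hQ1 ha0 ha1 i) (pow_nonneg hz0 i),
        mul_nonneg (mul_nonneg (hr_nonneg hQ0 hQ1 ha0 ha1 i) hQi.le) (pow_nonneg hz0 i)]
    have h0 : Tendsto (fun i : ℕ => |u i|) atTop (𝓝 0) := by
      apply squeeze_zero (fun i => abs_nonneg _) hupper hz'
    exact (tendsto_zero_iff_abs_tendsto_zero u).mpr h0
  have hptsum : Tendsto (fun n => ∑ i ∈ range n, (u i - u (i + 1))) atTop (𝓝 0) := by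
    have h1 : ∀ n, ∑ i ∈ range n, (u i - u (i + 1)) = u 0 - u n :=
      fun n => Finset.sum_range_sub' u n
    simp only [h1, hu0, zero_sub]
    simpa using hulim.neg
  have htsum0 : ∑' i : ℕ, (u i - u (i + 1)) = 0 :=
    tendsto_nhds_unique hsub.hasSum.tendsto_sum_nat hptsum
  have e : (∑' i : ℕ, (1 - z) * (hr Q a i * z ^ i))
      - ∑' i : ℕ, (1 - a * z) * (hr Q a i * (Q * z) ^ i) = 0 := by
    rw [← Summable.tsum_sub sA sB, tsum_congr hterm, htsum0]
  linarith [e]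

lemma funct_iter (hQ0 : 0 < Q) (hQ1 : Q < 1) (ha0 : 0 ≤ a) (ha1 : a < 1)
    (hz0 : 0 ≤ z) (hz1 : z < 1) (n : ℕ) :
    hF Q a z * ∏ k ∈ range n, (1 - z * Q ^ k)
      = hF Q a (Q ^ n * z) * ∏ k ∈ range n, (1 - a * z * Q ^ k) := by
  induction n with
  | zero => simp
  | succ n ih =>
    have hw0 : 0 ≤ Q ^ n * z := mul_nonneg (pow_pos hQ0 n).le hz0
    have hw1 : Q ^ n * z < 1 := by
      have h1 : Q ^ n ≤ 1 := pow_le_one₀ hQ0.le hQ1.le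
      have h2 : 0 < Q ^ n := pow_pos hQ0 n
      nlinarith
    have feq := funct_eq hQ0 hQ1 ha0 ha1 hw0 hw1
    have harg : Q * (Q ^ n * z) = Q ^ (n + 1) * z := by rw [pow_succ]; ring
    rw [harg] at feq
    rw [Finset.prod_range_succ, Finset.prod_range_succ]
    calc hF Q a z * ((∏ k ∈ range n, (1 - z * Q ^ k)) * (1 - z * Q ^ n))
        = (hF Q a z * ∏ k ∈ range n, (1 - z * Q ^ k)) * (1 - z * Q ^ n) := by ring
      _ = (hF Q a (Q ^ n * z) * ∏ k ∈ range n, (1 - a * z * Q ^ k)) * (1 - z * Q ^ n) := by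
          rw [ih]
      _ = ((1 - Q ^ n * z) * hF Q a (Q ^ n * z)) * ∏ k ∈ range n, (1 - a * z * Q ^ k) := by
          ring
      _ = ((1 - a * (Q ^ n * z)) * hF Q a (Q ^ (n + 1) * z))
            * ∏ k ∈ range n, (1 - a * z * Q ^ k) := by rw [feq]
      _ = hF Q a (Q ^ (n + 1) * z) * ((∏ k ∈ range n, (1 - a * z * Q ^ k)) * (1 - a * z * Q ^ n))
          := by ring

lemma hF_tendsto_one (hQ0 : 0 < Q) (hQ1 : Q < 1) (ha0 : 0 ≤ a) (ha1 : a < 1)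
    (hz0 : 0 ≤ z) (hz1 : z < 1) :
    Tendsto (fun n : ℕ => hF Q a (Q ^ n * z)) atTop (𝓝 1) := by
  set C : ℝ := ∑' i : ℕ, hr Q a (i + 1) * z ^ (i + 1) with hC
  have hsz := summable_hr hQ0 hQ1 ha0 ha1 hz0 hz1
  have hszs : Summable (fun i : ℕ => hr Q a (i + 1) * z ^ (i + 1)) :=
    (summable_nat_add_iff (f := fun i : ℕ => hr Q a i * z ^ i) 1).mpr hsz
  have hub : ∀ n : ℕ, hF Q a (Q ^ n * z) ≤ 1 + Q ^ n * C := by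
    intro n
    have hw0 : 0 ≤ Q ^ n * z := mul_nonneg (pow_pos hQ0 n).le hz0
    have hw1 : Q ^ n * z < 1 := by
      have h1 : Q ^ n ≤ 1 := pow_le_one₀ hQ0.le hQ1.le
      have h2 : 0 < Q ^ n := pow_pos hQ0 n
      nlinarith
    have hsw := summable_hr hQ0 hQ1 ha0 ha1 hw0 hw1
    have hsws : Summable (fun i : ℕ => hr Q a (i + 1) * (Q ^ n * z) ^ (i + 1)) :=
      (summable_nat_add_iff (f := fun i : ℕ => hr Q a i * (Q ^ n * z) ^ i) 1).mpr hsw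
    have hsplit : hF Q a (Q ^ n * z)
        = 1 + ∑' i : ℕ, hr Q a (i + 1) * (Q ^ n * z) ^ (i + 1) := by
      rw [hF, Summable.tsum_eq_zero_add hsw, hr_zero]
      norm_num
    rw [hsplit]
    have hle : ∑' i : ℕ, hr Q a (i + 1) * (Q ^ n * z) ^ (i + 1)
        ≤ ∑' i : ℕ, Q ^ n * (hr Q a (i + 1) * z ^ (i + 1)) := by
      apply Summable.tsum_le_tsum _ hsws (hszs.mul_left _)
      intro i
      have h1 : (Q ^ n * z) ^ (i + 1) = Q ^ (n * (i + 1)) * z ^ (i + 1) := by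
        rw [mul_pow, pow_mul]
      rw [h1]
      have h2 : Q ^ (n * (i + 1)) ≤ Q ^ n := by
        apply pow_le_pow_of_le_one hQ0.le hQ1.le
        exact Nat.le_mul_of_pos_right n (Nat.succ_pos i)
      have h3 : 0 ≤ hr Q a (i + 1) * z ^ (i + 1) :=
        mul_nonneg (hr_nonneg hQ0 hQ1 ha0 ha1 _) (pow_nonneg hz0 _)
      have h4 : 0 ≤ hr Q a (i + 1) := hr_nonneg hQ0 hQ1 ha0 ha1 _
      have h5 : 0 ≤ z ^ (i + 1) := pow_nonneg hz0 _
      calc hr Q a (i + 1) * (Q ^ (n * (i + 1)) * z ^ (i + 1))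
          = Q ^ (n * (i + 1)) * (hr Q a (i + 1) * z ^ (i + 1)) := by ring
        _ ≤ Q ^ n * (hr Q a (i + 1) * z ^ (i + 1)) := by
            apply mul_le_mul_of_nonneg_right h2 h3
    rw [tsum_mul_left] at hle
    linarith
  have hlb : ∀ n : ℕ, 1 ≤ hF Q a (Q ^ n * z) := by
    intro n
    have hw0 : 0 ≤ Q ^ n * z := mul_nonneg (pow_pos hQ0 n).le hz0
    have hw1 : Q ^ n * z < 1 := by
      have h1 : Q ^ n ≤ 1 := pow_le_one₀ hQ0.le hQ1.le
      have h2 : 0 < Q ^ n := pow_pos hQ0 n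
      nlinarith
    exact hF_ge_one hQ0 hQ1 ha0 ha1 hw0 hw1
  have hupperlim : Tendsto (fun n : ℕ => 1 + Q ^ n * C) atTop (𝓝 1) := by
    have := (tendsto_pow_atTop_nhds_zero_of_lt_one hQ0.le hQ1).mul_const C
    have h2 := this.const_add 1
    simpa using h2
  exact tendsto_of_tendsto_of_tendsto_of_le_of_le tendsto_const_nhds hupperlim hlb hub

theorem heine (hQ0 : 0 < Q) (hQ1 : Q < 1) (ha0 : 0 ≤ a) (ha1 : a < 1)
    (hz0 : 0 ≤ z) (hz1 : z < 1) :
    hF Q a z * qPochInf z Q = qPochInf (a * z) Q := by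
  have haz0 : 0 ≤ a * z := mul_nonneg ha0 hz0
  have haz1 : a * z < 1 := by nlinarith
  have h1 : Tendsto (fun n => hF Q a z * ∏ k ∈ range n, (1 - z * Q ^ k)) atTop
      (𝓝 (hF Q a z * qPochInf z Q)) :=
    (poch_tendsto hQ0 hQ1 hz0 hz1).const_mul _
  have h2 : Tendsto (fun n => hF Q a (Q ^ n * z) * ∏ k ∈ range n, (1 - (a * z) * Q ^ k)) atTop
      (𝓝 (1 * qPochInf (a * z) Q)) :=
    (hF_tendsto_one hQ0 hQ1 ha0 ha1 hz0 hz1).mul (poch_tendsto hQ0 hQ1 haz0 haz1)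
  rw [one_mul] at h2
  have heq : (fun n => hF Q a z * ∏ k ∈ range n, (1 - z * Q ^ k))
      = fun n => hF Q a (Q ^ n * z) * ∏ k ∈ range n, (1 - (a * z) * Q ^ k) := by
    funext n
    have := funct_iter hQ0 hQ1 ha0 ha1 hz0 hz1 n
    simpa [mul_assoc] using this
  rw [heq] at h1
  exact tendsto_nhds_unique h1 h2

theorem heine_div (hQ0 : 0 < Q) (hQ1 : Q < 1) (ha0 : 0 ≤ a) (ha1 : a < 1)
    (hz0 : 0 ≤ z) (hz1 : z < 1) :
    hF Q a z = qPochInf (a * z) Q / qPochInf z Q := by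
  have hpos := poch_pos hQ0 hQ1 hz0 hz1
  field_simp
  exact heine hQ0 hQ1 ha0 ha1 hz0 hz1

end Heine


lemma pow_rpow_comm {q : ℝ} (hq : 0 ≤ q) (i : ℕ) (p : ℝ) :
    ((q ^ i : ℝ)) ^ p = (q ^ p) ^ i := by
  rw [← Real.rpow_natCast q i, ← Real.rpow_mul hq, mul_comm, Real.rpow_mul hq,
    Real.rpow_natCast]

theorem stmt4 (p q α l x : ℝ) (hq0 : 0 < q) (hq1 : q < 1) (hp : 0 < p)
    (hα : 0 < α) (hl : -1 < l) (hx : 0 < x) :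
    jackson0 q x (fun t => t ^ (p - 1) * genExp p q (α - 1) x (q * t) * t ^ (p * l)) =
      1 / qNum p q *
        (qGammaF (q ^ p) α * qGammaF (q ^ p) (l + 1) / qGammaF (q ^ p) (α + l + 1)) *
        x ^ (p * (α + l)) := by
  have hq' : (0:ℝ) < 1 - q := by linarith
  set Q : ℝ := q ^ p with hQdef
  have hQ0 : 0 < Q := Real.rpow_pos_of_pos hq0 p
  have hQ1 : Q < 1 := Real.rpow_lt_one hq0.le hq1 hp
  have hB0 : (0:ℝ) < 1 - Q := by linarith
  set A : ℝ := Q ^ α with hAdef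
  have hA0 : 0 < A := Real.rpow_pos_of_pos hQ0 α
  have hA1 : A < 1 := Real.rpow_lt_one hQ0.le hQ1 hα
  set Z : ℝ := Q ^ (l + 1) with hZdef
  have hZ0 : 0 < Z := Real.rpow_pos_of_pos hQ0 (l + 1)
  have hZ1 : Z < 1 := Real.rpow_lt_one hQ0.le hQ1 (by linarith)
  have hAZ : A * Z = Q ^ (α + l + 1) := by
    rw [hAdef, hZdef, ← Real.rpow_add hQ0]
    congr 1
    ring
  have hPQ := poch_pos hQ0 hQ1 hQ0.le hQ1
  have hPA := poch_pos hQ0 hQ1 hA0.le hA1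
  have hPZ := poch_pos hQ0 hQ1 hZ0.le hZ1
  have hPAZ : 0 < qPochInf (Q ^ (α + l + 1)) Q := by
    rw [← hAZ]
    exact poch_pos hQ0 hQ1 (mul_nonneg hA0.le hZ0.le) (by nlinarith)
  have hterm : ∀ i : ℕ,
      q ^ i * ((fun t => t ^ (p - 1) * genExp p q (α - 1) x (q * t) * t ^ (p * l)) (q ^ i * x))
      = (x ^ (p * (α + l) - 1) * (qPochInf Q Q / qPochInf A Q)) * (hr Q A i * Z ^ i) := by
    intro i
    have hqi : (0:ℝ) < q ^ i := pow_pos hq0 i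
    have hxp : (0:ℝ) < x ^ p := Real.rpow_pos_of_pos hx p
    simp only [genExp, qExpGen]
    rw [← hQdef]
    have harg : q * (q ^ i * x) = q ^ (i + 1) * x := by rw [pow_succ]; ring
    have hW : (q * (q ^ i * x)) ^ p / x ^ p = Q * Q ^ i := by
      rw [harg, Real.mul_rpow (pow_pos hq0 (i + 1)).le hx.le, pow_rpow_comm hq0.le (i + 1) p,
        mul_div_assoc, div_self (ne_of_gt hxp), mul_one, ← hQdef, pow_succ']
    rw [hW]
    have h1 : Q ^ (α - 1) * Q = A := by
      have h := Real.rpow_add hQ0 (α - 1) 1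
      rw [Real.rpow_one] at h
      rw [show α - 1 + 1 = α from by ring, ← hAdef] at h
      exact h.symm
    have hQa : Q ^ (α - 1) * (Q * Q ^ i) = A * Q ^ i := by
      calc Q ^ (α - 1) * (Q * Q ^ i) = (Q ^ (α - 1) * Q) * Q ^ i := by ring
        _ = A * Q ^ i := by rw [h1]
    rw [hQa]
    have hprodQpos : (0:ℝ) < ∏ k ∈ range i, (1 - Q * Q ^ k) :=
      Finset.prod_pos fun k _ => factor_pos hQ0 hQ1 hQ0.le hQ1 k
    have hprodApos : (0:ℝ) < ∏ k ∈ range i, (1 - A * Q ^ k) :=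
      Finset.prod_pos fun k _ => factor_pos hQ0 hQ1 hA0.le hA1 k
    have hsh1 : qPochInf (Q * Q ^ i) Q = qPochInf Q Q / ∏ k ∈ range i, (1 - Q * Q ^ k) := by
      rw [eq_div_iff (ne_of_gt hprodQpos), mul_comm]
      exact (poch_shift hQ0 hQ1 hQ0.le hQ1 i).symm
    have hsh2 : qPochInf (A * Q ^ i) Q = qPochInf A Q / ∏ k ∈ range i, (1 - A * Q ^ k) := by
      rw [eq_div_iff (ne_of_gt hprodApos), mul_comm]
      exact (poch_shift hQ0 hQ1 hA0.le hA1 i).symm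
    rw [hsh1, hsh2]
    have hhr : hr Q A i = (∏ k ∈ range i, (1 - A * Q ^ k)) / (∏ k ∈ range i, (1 - Q * Q ^ k)) := by
      rw [hr, Finset.prod_div_distrib]
      congr 1
      exact Finset.prod_congr rfl fun k _ => by rw [pow_succ']
    rw [hhr]
    have hs1 : (q ^ i * x) ^ (p - 1) = (q ^ (p - 1)) ^ i * x ^ (p - 1) := by
      rw [Real.mul_rpow hqi.le hx.le, pow_rpow_comm hq0.le i (p - 1)]
    have hs2 : (q ^ i * x) ^ (p * l) = (q ^ (p * l)) ^ i * x ^ (p * l) := by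
      rw [Real.mul_rpow hqi.le hx.le, pow_rpow_comm hq0.le i (p * l)]
    have hs3 : (x ^ p) ^ (α - 1) = x ^ (p * (α - 1)) := (Real.rpow_mul hx.le p (α - 1)).symm
    rw [hs1, hs2, hs3]
    have hZi : Z ^ i = (q ^ (p * (l + 1))) ^ i := by
      rw [hZdef, hQdef, ← Real.rpow_mul hq0.le]
    rw [hZi]
    have hq_comb : q * q ^ (p - 1) * q ^ (p * l) = q ^ (p * (l + 1)) := by
      have e1 : q * q ^ (p - 1) = q ^ (1 + (p - 1)) := by
        rw [Real.rpow_add hq0 1 (p - 1), Real.rpow_one]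
      rw [e1, ← Real.rpow_add hq0]
      congr 1
      ring
    have hGZ : (q ^ (p * (l + 1))) ^ i = q ^ i * (q ^ (p - 1)) ^ i * (q ^ (p * l)) ^ i := by
      rw [← hq_comb, mul_pow, mul_pow]
    have hXC : x ^ (p * (α + l) - 1) = x ^ (p - 1) * x ^ (p * (α - 1)) * x ^ (p * l) := by
      rw [← Real.rpow_add hx, ← Real.rpow_add hx]
      congr 1
      ring
    rw [hGZ, hXC]
    have hPAne : qPochInf A Q ≠ 0 := ne_of_gt hPA
    field_simp
  have hsum : ∑' i : ℕ,
      q ^ i * ((fun t => t ^ (p - 1) * genExp p q (α - 1) x (q * t) * t ^ (p * l)) (q ^ i * x))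
      = (x ^ (p * (α + l) - 1) * (qPochInf Q Q / qPochInf A Q)) * hF Q A Z := by
    rw [hF, ← tsum_mul_left]
    exact tsum_congr hterm
  rw [jackson0, hsum, heine_div hQ0 hQ1 hA0.le hA1 hZ0.le hZ1, hAZ]
  rw [qNum, qGammaF, qGammaF, qGammaF]
  rw [← hQdef, ← hAdef, ← hZdef]
  have hx1 : x * x ^ (p * (α + l) - 1) = x ^ (p * (α + l)) := by
    nth_rewrite 1 [← Real.rpow_one x]
    rw [← Real.rpow_add hx]
    congr 1
    ring
  have hrp : ∀ t : ℝ, (0:ℝ) < (1 - Q) ^ t := fun t => Real.rpow_pos_of_pos hB0 t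
  have hBcomb : (1 - Q) ^ (1 - α) * (1 - Q) ^ (-l)
      = (1 - Q) * (1 - Q) ^ (-l + -α) := by
    have h1 : (1 - Q) ^ (1 - α) * (1 - Q) ^ (-l) = (1 - Q) ^ ((1 - α) + (-l)) :=
      (Real.rpow_add hB0 _ _).symm
    have h2 : (1 - Q) * (1 - Q) ^ (-l + -α) = (1 - Q) ^ (1 + (-l + -α)) := by
      rw [Real.rpow_add hB0 1 (-l + -α), Real.rpow_one]
    rw [h1, h2]
    congr 1
    ring
  have hE : (1 - Q) ^ (1 - α) * (1 - Q) ^ (1 - (l + 1))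
      = (1 - Q) * (1 - Q) ^ (1 - (α + l + 1)) := by
    have h2 : (1 - Q) * (1 - Q) ^ (1 - (α + l + 1)) = (1 - Q) ^ (1 + (1 - (α + l + 1))) := by
      rw [Real.rpow_add hB0 1, Real.rpow_one]
    rw [← Real.rpow_add hB0, h2]
    congr 1
    ring
  have hr3 : (1 - Q) ^ (1 - (α + l + 1))
      = (1 - Q) ^ (1 - α) * (1 - Q) ^ (1 - (l + 1)) / (1 - Q) := by
    rw [eq_div_iff hB0.ne', hE]
    ring
  have hn1 : (1 - Q) ^ (1 - α) ≠ 0 := (hrp _).ne'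
  have hn2 : (1 - Q) ^ (1 - (l + 1)) ≠ 0 := (hrp _).ne'
  rw [hr3, ← hx1]
  field_simp
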